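/- Let α > 0 and let G be a subgroup of SL(2,ℝ) containing g₀ = (cosh α, sinh(α)/α; α sinh α, cosh α) and a matrix g such that g v̄₊ ∉ {v̄₊, v̄₋} and g v̄₋ ∉ {v̄₊, v̄₋}, where v± = (1, ±α)ᵀ. Then for every direction v̄ ∈ P(ℝ²), the orbit {h v̄ : h ∈ G} contains at least 3 elements. -/

import Mathlib

set_option linter.unnecessarySeqFocus false

open Matrix Submodule

private lemma aux8_span_mulVec (A : Matrix (Fin 2) (Fin 2) ℝ) (u : Fin 2 → ℝ) :
    span ℝ {A.mulVec u} = Submodule.map A.mulVecLin (span ℝ {u}) := by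
  rw [Submodule.map_span, Set.image_singleton, Matrix.mulVecLin_apply]

private lemma aux8_mulVec_inj (A : SpecialLinearGroup (Fin 2) ℝ) :
    Function.Injective (A : Matrix (Fin 2) (Fin 2) ℝ).mulVecLin := by
  intro x y h
  have h' : (A : Matrix (Fin 2) (Fin 2) ℝ).mulVec x
      = (A : Matrix (Fin 2) (Fin 2) ℝ).mulVec y := by
    simpa [Matrix.mulVecLin_apply] using h
  have h2 := congrArg
    (fun z => ((A⁻¹ : SpecialLinearGroup (Fin 2) ℝ) : Matrix (Fin 2) (Fin 2) ℝ).mulVec z) h'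
  simp only [Matrix.mulVec_mulVec, ← Matrix.SpecialLinearGroup.coe_mul, inv_mul_cancel,
    Matrix.SpecialLinearGroup.coe_one, Matrix.one_mulVec] at h2
  exact h2

private lemma aux8_mulVec_ne_zero (A : SpecialLinearGroup (Fin 2) ℝ) {w : Fin 2 → ℝ}
    (hw : w ≠ 0) : (A : Matrix (Fin 2) (Fin 2) ℝ).mulVec w ≠ 0 := by
  intro h0
  apply hw
  have : (A : Matrix (Fin 2) (Fin 2) ℝ).mulVecLin w
      = (A : Matrix (Fin 2) (Fin 2) ℝ).mulVecLin 0 := by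
    simp [Matrix.mulVecLin_apply, h0]
  exact aux8_mulVec_inj A this

private lemma aux8_span_inj (A : SpecialLinearGroup (Fin 2) ℝ) (u v : Fin 2 → ℝ)
    (h : span ℝ {(A : Matrix (Fin 2) (Fin 2) ℝ).mulVec u}
        = span ℝ {(A : Matrix (Fin 2) (Fin 2) ℝ).mulVec v}) :
    span ℝ {u} = span ℝ {v} := by
  rw [aux8_span_mulVec, aux8_span_mulVec] at h
  exact Submodule.map_injective_of_injective (aux8_mulVec_inj A) h

private lemma aux8_span_congr (A : SpecialLinearGroup (Fin 2) ℝ) (u v : Fin 2 → ℝ)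
    (h : span ℝ {u} = span ℝ {v}) :
    span ℝ {(A : Matrix (Fin 2) (Fin 2) ℝ).mulVec u}
      = span ℝ {(A : Matrix (Fin 2) (Fin 2) ℝ).mulVec v} := by
  rw [aux8_span_mulVec, aux8_span_mulVec, h]

/-- The only projective fixed points of a matrix of the shape `!![c, s/α; αs, c]`
with `s ≠ 0` are the spans of `![1, α]` and `![1, -α]`. -/
private lemma aux8_key {α c s : ℝ} (hα : α ≠ 0) (hs : s ≠ 0) (w : Fin 2 → ℝ) (hw : w ≠ 0)
    (h : span ℝ {(!![c, s / α; α * s, c]).mulVec w} = span ℝ {w}) :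
    span ℝ {w} = span ℝ {![(1 : ℝ), α]} ∨ span ℝ {w} = span ℝ {![(1 : ℝ), -α]} := by
  have hmem : (!![c, s / α; α * s, c]).mulVec w ∈ span ℝ {w} := by
    rw [← h]; exact Submodule.mem_span_singleton_self _
  obtain ⟨t, ht⟩ := Submodule.mem_span_singleton.mp hmem
  have e0 : t * w 0 = c * w 0 + s / α * w 1 := by
    have := congrFun ht 0
    simpa [Matrix.mulVec, dotProduct, Fin.sum_univ_two] using this
  have e1 : t * w 1 = α * s * w 0 + c * w 1 := by
    have := congrFun ht 1
    simpa [Matrix.mulVec, dotProduct, Fin.sum_univ_two] using this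
  have hdiv : α * (s / α * w 1) = s * w 1 := by field_simp
  have a0 : α * (t - c) * w 0 = s * w 1 := by linear_combination α * e0 + hdiv
  have a1 : (t - c) * w 1 = α * s * w 0 := by linear_combination e1
  have hw0 : w 0 ≠ 0 := by
    intro h0
    rw [h0] at a0
    have hsw : s * w 1 = 0 := by linear_combination -a0
    have hw1 : w 1 = 0 := (mul_eq_zero.mp hsw).resolve_left hs
    apply hw; funext i; fin_cases i <;> simp [h0, hw1]
  have hw1 : w 1 ≠ 0 := by
    intro h1
    rw [h1] at a1
    have hsw : α * s * w 0 = 0 := by linear_combination -a1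
    rcases mul_eq_zero.mp hsw with h' | h'
    · exact (mul_ne_zero hα hs) h'
    · exact hw0 h'
  have hprod : α * ((t - c) * (t - c)) * (w 0 * w 1) = α * (s * s) * (w 0 * w 1) := by
    linear_combination ((t - c) * w 1) * a0 + (s * w 1) * a1
  have key : (t - c) * (t - c) = s * s :=
    mul_left_cancel₀ hα (mul_right_cancel₀ (mul_ne_zero hw0 hw1) hprod)
  have hcases : t - c = s ∨ t - c = -s := by
    rcases mul_eq_zero.mp (show (t - c - s) * (t - c + s) = 0 by linear_combination key) with
      h' | h'
    · left; linarith
    · right; linarith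
  rcases hcases with hc | hc
  · left
    rw [hc] at a0
    have hw1' : w 1 = α * w 0 :=
      mul_left_cancel₀ hs (show s * w 1 = s * (α * w 0) by linear_combination -a0)
    have hweq : w = w 0 • ![(1 : ℝ), α] := by
      funext i; fin_cases i <;> simp [hw1'] <;> ring
    rw [hweq]
    exact Submodule.span_singleton_smul_eq (isUnit_iff_ne_zero.mpr hw0) _
  · right
    rw [hc] at a0
    have hw1' : w 1 = -α * w 0 :=
      mul_left_cancel₀ hs (show s * w 1 = s * (-α * w 0) by linear_combination -a0)
    have hweq : w = w 0 • ![(1 : ℝ), -α] := by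
      funext i; fin_cases i <;> simp [hw1'] <;> ring
    rw [hweq]
    exact Submodule.span_singleton_smul_eq (isUnit_iff_ne_zero.mpr hw0) _

/-- The eigendirection case: if `w̄` equals an eigendirection `v̄` of `g₀`, then
`w̄`, `g w̄` and `g₀ g w̄` are pairwise distinct. -/
private lemma aux8_main (α : ℝ) (g₀ g : SpecialLinearGroup (Fin 2) ℝ) (v : Fin 2 → ℝ)
    (hfix : span ℝ {(g₀ : Matrix (Fin 2) (Fin 2) ℝ).mulVec v} = span ℝ {v})
    (hvset : span ℝ {v} = span ℝ {![(1 : ℝ), α]} ∨ span ℝ {v} = span ℝ {![(1 : ℝ), -α]})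
    (hgv : span ℝ {(g : Matrix (Fin 2) (Fin 2) ℝ).mulVec v} ≠ span ℝ {![(1 : ℝ), α]}
        ∧ span ℝ {(g : Matrix (Fin 2) (Fin 2) ℝ).mulVec v} ≠ span ℝ {![(1 : ℝ), -α]})
    (hkey : ∀ u : Fin 2 → ℝ, u ≠ 0 →
        span ℝ {(g₀ : Matrix (Fin 2) (Fin 2) ℝ).mulVec u} = span ℝ {u} →
        span ℝ {u} = span ℝ {![(1 : ℝ), α]} ∨ span ℝ {u} = span ℝ {![(1 : ℝ), -α]})
    (w : Fin 2 → ℝ) (hw : w ≠ 0) (hvw : span ℝ {w} = span ℝ {v}) :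
    span ℝ {w} ≠ span ℝ {(g : Matrix (Fin 2) (Fin 2) ℝ).mulVec w}
    ∧ span ℝ {w} ≠ span ℝ {((g₀ * g : SpecialLinearGroup (Fin 2) ℝ)
        : Matrix (Fin 2) (Fin 2) ℝ).mulVec w}
    ∧ span ℝ {(g : Matrix (Fin 2) (Fin 2) ℝ).mulVec w}
        ≠ span ℝ {((g₀ * g : SpecialLinearGroup (Fin 2) ℝ)
        : Matrix (Fin 2) (Fin 2) ℝ).mulVec w} := by
  have hgw : span ℝ {(g : Matrix (Fin 2) (Fin 2) ℝ).mulVec w}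
      = span ℝ {(g : Matrix (Fin 2) (Fin 2) ℝ).mulVec v} := aux8_span_congr g w v hvw
  have hmul : ((g₀ * g : SpecialLinearGroup (Fin 2) ℝ) : Matrix (Fin 2) (Fin 2) ℝ).mulVec w
      = (g₀ : Matrix (Fin 2) (Fin 2) ℝ).mulVec ((g : Matrix (Fin 2) (Fin 2) ℝ).mulVec w) := by
    rw [Matrix.SpecialLinearGroup.coe_mul, ← Matrix.mulVec_mulVec]
  refine ⟨?_, ?_, ?_⟩
  · intro heq
    rw [hvw] at heq
    rcases hvset with h' | h'
    · exact hgv.1 (by rw [← hgw, ← heq, h'])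
    · exact hgv.2 (by rw [← hgw, ← heq, h'])
  · intro heq
    rw [hmul, hvw, ← hfix] at heq
    have := aux8_span_inj g₀ v ((g : Matrix (Fin 2) (Fin 2) ℝ).mulVec w) heq
    rcases hvset with h' | h'
    · exact hgv.1 (by rw [← hgw, ← this, h'])
    · exact hgv.2 (by rw [← hgw, ← this, h'])
  · intro heq
    rw [hmul] at heq
    have hnz : (g : Matrix (Fin 2) (Fin 2) ℝ).mulVec w ≠ 0 := aux8_mulVec_ne_zero g hw
    rcases hkey _ hnz heq.symm with h' | h'
    · exact hgv.1 (by rw [← hgw, h'])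
    · exact hgv.2 (by rw [← hgw, h'])

theorem stmt_8 (α : ℝ) (hα : α > 0)
    (G : Subgroup (Matrix.SpecialLinearGroup (Fin 2) ℝ))
    (g₀ g : Matrix.SpecialLinearGroup (Fin 2) ℝ)
    (hg₀G : g₀ ∈ G) (hgG : g ∈ G)
    (hg₀ : (g₀ : Matrix (Fin 2) (Fin 2) ℝ)
        = !![Real.cosh α, Real.sinh α / α; α * Real.sinh α, Real.cosh α])
    (hgp : Submodule.span ℝ {(g : Matrix (Fin 2) (Fin 2) ℝ).mulVec ![(1 : ℝ), α]}
        ∉ ({Submodule.span ℝ {![(1 : ℝ), α]}, Submodule.span ℝ {![(1 : ℝ), -α]}}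
            : Set (Submodule ℝ (Fin 2 → ℝ))))
    (hgm : Submodule.span ℝ {(g : Matrix (Fin 2) (Fin 2) ℝ).mulVec ![(1 : ℝ), -α]}
        ∉ ({Submodule.span ℝ {![(1 : ℝ), α]}, Submodule.span ℝ {![(1 : ℝ), -α]}}
            : Set (Submodule ℝ (Fin 2 → ℝ)))) :
    ∀ w : Fin 2 → ℝ, w ≠ 0 →
      ∃ h₁ h₂ h₃ : Matrix.SpecialLinearGroup (Fin 2) ℝ, h₁ ∈ G ∧ h₂ ∈ G ∧ h₃ ∈ G ∧
        Submodule.span ℝ {(h₁ : Matrix (Fin 2) (Fin 2) ℝ).mulVec w}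
          ≠ Submodule.span ℝ {(h₂ : Matrix (Fin 2) (Fin 2) ℝ).mulVec w} ∧
        Submodule.span ℝ {(h₁ : Matrix (Fin 2) (Fin 2) ℝ).mulVec w}
          ≠ Submodule.span ℝ {(h₃ : Matrix (Fin 2) (Fin 2) ℝ).mulVec w} ∧
        Submodule.span ℝ {(h₂ : Matrix (Fin 2) (Fin 2) ℝ).mulVec w}
          ≠ Submodule.span ℝ {(h₃ : Matrix (Fin 2) (Fin 2) ℝ).mulVec w} := by
  intro w hw
  have hα' : α ≠ 0 := ne_of_gt hα
  have hspos : 0 < Real.sinh α := Real.sinh_pos_iff.mpr hα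
  have hcpos : 0 < Real.cosh α := Real.cosh_pos α
  have hs0 : Real.sinh α ≠ 0 := ne_of_gt hspos
  -- the key property of g₀
  have hkey : ∀ u : Fin 2 → ℝ, u ≠ 0 →
      span ℝ {(g₀ : Matrix (Fin 2) (Fin 2) ℝ).mulVec u} = span ℝ {u} →
      span ℝ {u} = span ℝ {![(1 : ℝ), α]} ∨ span ℝ {u} = span ℝ {![(1 : ℝ), -α]} := by
    intro u hu h
    exact aux8_key hα' hs0 u hu (by rw [← hg₀]; exact h)
  by_cases hcase : span ℝ {w} = span ℝ {![(1 : ℝ), α]}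
      ∨ span ℝ {w} = span ℝ {![(1 : ℝ), -α]}
  · -- w is an eigendirection: use 1, g, g₀ * g
    obtain ⟨v, hvw, hvset, hgv⟩ : ∃ v : Fin 2 → ℝ, span ℝ {w} = span ℝ {v} ∧
        (span ℝ {v} = span ℝ {![(1 : ℝ), α]} ∨ span ℝ {v} = span ℝ {![(1 : ℝ), -α]}) ∧
        (span ℝ {(g : Matrix (Fin 2) (Fin 2) ℝ).mulVec v} ≠ span ℝ {![(1 : ℝ), α]}
          ∧ span ℝ {(g : Matrix (Fin 2) (Fin 2) ℝ).mulVec v} ≠ span ℝ {![(1 : ℝ), -α]}) := by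
      rcases hcase with h' | h'
      · refine ⟨![(1 : ℝ), α], h', Or.inl rfl, ?_, ?_⟩ <;>
          · intro h''; exact hgp (by rw [h'']; simp)
      · refine ⟨![(1 : ℝ), -α], h', Or.inr rfl, ?_, ?_⟩ <;>
          · intro h''; exact hgm (by rw [h'']; simp)
    have hfix : span ℝ {(g₀ : Matrix (Fin 2) (Fin 2) ℝ).mulVec v} = span ℝ {v} := by
      rcases hvset with h' | h' <;> rw [h']
      · have hev : (g₀ : Matrix (Fin 2) (Fin 2) ℝ).mulVec ![(1 : ℝ), α]
            = (Real.cosh α + Real.sinh α) • ![(1 : ℝ), α] := by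
          rw [hg₀]
          funext i; fin_cases i
          · simp [Matrix.mulVec, dotProduct, Fin.sum_univ_two,
              div_mul_cancel₀ _ hα']
          · simp [Matrix.mulVec, dotProduct, Fin.sum_univ_two]
            linear_combination α * (Real.cosh_add_sinh α)
        have h1 : span ℝ {(g₀ : Matrix (Fin 2) (Fin 2) ℝ).mulVec ![(1 : ℝ), α]}
            = span ℝ {![(1 : ℝ), α]} := by
          rw [hev]
          exact Submodule.span_singleton_smul_eq
            (isUnit_iff_ne_zero.mpr (by positivity)) _
        calc span ℝ {(g₀ : Matrix (Fin 2) (Fin 2) ℝ).mulVec v}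
            = span ℝ {(g₀ : Matrix (Fin 2) (Fin 2) ℝ).mulVec ![(1 : ℝ), α]} :=
              aux8_span_congr g₀ v _ h'
          _ = span ℝ {![(1 : ℝ), α]} := h1
      · have hev : (g₀ : Matrix (Fin 2) (Fin 2) ℝ).mulVec ![(1 : ℝ), -α]
            = (Real.cosh α - Real.sinh α) • ![(1 : ℝ), -α] := by
          rw [hg₀]
          funext i; fin_cases i
          · simp [Matrix.mulVec, dotProduct, Fin.sum_univ_two,
              div_mul_cancel₀ _ hα']
            linear_combination Real.cosh_sub_sinh α
          · simp [Matrix.mulVec, dotProduct, Fin.sum_univ_two]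
            linear_combination (-α) * (Real.cosh_sub_sinh α)
        have hne : Real.cosh α - Real.sinh α ≠ 0 := by
          rw [Real.cosh_sub_sinh]; positivity
        have h1 : span ℝ {(g₀ : Matrix (Fin 2) (Fin 2) ℝ).mulVec ![(1 : ℝ), -α]}
            = span ℝ {![(1 : ℝ), -α]} := by
          rw [hev]
          exact Submodule.span_singleton_smul_eq (isUnit_iff_ne_zero.mpr hne) _
        calc span ℝ {(g₀ : Matrix (Fin 2) (Fin 2) ℝ).mulVec v}
            = span ℝ {(g₀ : Matrix (Fin 2) (Fin 2) ℝ).mulVec ![(1 : ℝ), -α]} :=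
              aux8_span_congr g₀ v _ h'
          _ = span ℝ {![(1 : ℝ), -α]} := h1
    obtain ⟨h1, h2, h3⟩ := aux8_main α g₀ g v hfix hvset hgv hkey w hw hvw
    refine ⟨1, g, g₀ * g, one_mem G, hgG, mul_mem hg₀G hgG, ?_, ?_, ?_⟩
    · simpa using h1
    · simpa using h2
    · exact h3
  · -- w is not an eigendirection: use 1, g₀, g₀ * g₀
    push_neg at hcase
    have hg₀sq : ((g₀ * g₀ : Matrix.SpecialLinearGroup (Fin 2) ℝ)
        : Matrix (Fin 2) (Fin 2) ℝ)
        = !![Real.cosh α * Real.cosh α + Real.sinh α * Real.sinh α,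
            (2 * Real.cosh α * Real.sinh α) / α;
            α * (2 * Real.cosh α * Real.sinh α),
            Real.cosh α * Real.cosh α + Real.sinh α * Real.sinh α] := by
      rw [Matrix.SpecialLinearGroup.coe_mul, hg₀]
      ext i j
      fin_cases i <;> fin_cases j <;>
        · simp only [Matrix.mul_apply, Fin.sum_univ_two, Matrix.cons_val', Matrix.cons_val_zero,
            Matrix.cons_val_one, Matrix.head_cons, Matrix.head_fin_const, Matrix.empty_val',
            Matrix.cons_val_fin_one, Matrix.of_apply, Fin.isValue, Fin.zero_eta, Fin.mk_one]
          field_simp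
          all_goals ring
    have hs2 : 2 * Real.cosh α * Real.sinh α ≠ 0 := by positivity
    refine ⟨1, g₀, g₀ * g₀, one_mem G, hg₀G, mul_mem hg₀G hg₀G, ?_, ?_, ?_⟩
    · simp only [Matrix.SpecialLinearGroup.coe_one, Matrix.one_mulVec]
      intro heq
      rcases hkey w hw heq.symm with h' | h'
      · exact hcase.1 h'
      · exact hcase.2 h'
    · simp only [Matrix.SpecialLinearGroup.coe_one, Matrix.one_mulVec]
      intro heq
      rcases aux8_key hα' hs2 w hw (by rw [← hg₀sq]; exact heq.symm) with h' | h'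
      · exact hcase.1 h'
      · exact hcase.2 h'
    · intro heq
      rw [Matrix.SpecialLinearGroup.coe_mul, ← Matrix.mulVec_mulVec] at heq
      have := aux8_span_inj g₀ w ((g₀ : Matrix (Fin 2) (Fin 2) ℝ).mulVec w) heq
      rcases hkey w hw this.symm with h' | h'
      · exact hcase.1 h'
      · exact hcase.2 h'
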